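/- Let w₀ : ℝ³×ℝ³ → ℝ be measurable with ‖w₀‖_{L¹_x(L^{6/5}_v)} := ∫_{ℝ³} ( ∫_{ℝ³} |w₀(x,v)|^{6/5} dv )^{5/6} dx < ∞. Then for every t > 0 the function x ↦ ∫_{ℝ³} w₀(x − t v, v) dv belongs to L^{6/5}(ℝ³) and ‖ ∫_{ℝ³} w₀(x − t v, v) dv ‖_{L^{6/5}(ℝ³_x)} ≤ t^{-1/2} ‖w₀‖_{L¹_x(L^{6/5}_v)}. -/

import Mathlib

open MeasureTheory Real Filter ENNReal

noncomputable section

abbrev E3 := EuclideanSpace ℝ (Fin 3)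

/-- The mixed norm `‖w₀‖_{L¹_x(L^{6/5}_v)} = ∫ (∫ |w₀(x,v)|^{6/5} dv)^{5/6} dx`. -/
def mixedNorm (w₀ : E3 × E3 → ℝ) : ℝ≥0∞ :=
  ∫⁻ x : E3, (∫⁻ v : E3, (‖w₀ (x, v)‖₊ : ℝ≥0∞) ^ ((6:ℝ)/5)) ^ ((5:ℝ)/6)

section Minkowski

variable {α β : Type*} [MeasurableSpace α] [MeasurableSpace β]

lemma rpow_split (p : ℝ) (hp : 1 < p) (a : ℝ≥0∞) : a ^ p = a ^ (p - 1) * a := by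
  rcases eq_or_ne a 0 with rfl | h0
  · rw [ENNReal.zero_rpow_of_pos (by linarith), ENNReal.zero_rpow_of_pos (by linarith), zero_mul]
  rcases eq_or_ne a ⊤ with rfl | ht
  · rw [ENNReal.top_rpow_of_pos (by linarith), ENNReal.top_rpow_of_pos (by linarith),
      ENNReal.top_mul_top]
  · conv_lhs => rw [show p = p - 1 + 1 by ring]
    rw [ENNReal.rpow_add _ _ h0 ht, ENNReal.rpow_one]

lemma minkowski_aux (μ : Measure α) (ν : Measure β) [SFinite μ] [SFinite ν]
    {p q : ℝ} (hpq : p.HolderConjugate q)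
    {F : α → β → ℝ≥0∞} (hF : Measurable (Function.uncurry F))
    (hfin : (∫⁻ x, (∫⁻ y, F x y ∂ν) ^ p ∂μ) ≠ ⊤) :
    (∫⁻ x, (∫⁻ y, F x y ∂ν) ^ p ∂μ) ^ (1/p) ≤ ∫⁻ y, (∫⁻ x, F x y ^ p ∂μ) ^ (1/p) ∂ν := by
  have hppos : 0 < p := hpq.pos
  have hqpos : 0 < q := hpq.symm.pos
  set Φ : α → ℝ≥0∞ := fun x => ∫⁻ y, F x y ∂ν with hΦ
  have hΦm : Measurable Φ := hF.lintegral_prod_right'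
  set A : ℝ≥0∞ := ∫⁻ x, Φ x ^ p ∂μ with hA
  set B : ℝ≥0∞ := ∫⁻ y, (∫⁻ x, F x y ^ p ∂μ) ^ (1/p) ∂ν with hB
  rcases eq_or_ne A 0 with h0 | h0
  · rw [h0, ENNReal.zero_rpow_of_pos (one_div_pos.mpr hppos)]; exact zero_le
  have hp1 := hpq.lt
  have key : A ≤ A ^ (1/q) * B := by
    have step1 : A = ∫⁻ y, ∫⁻ x, Φ x ^ (p - 1) * F x y ∂μ ∂ν := by
      rw [hA, ← lintegral_lintegral_swap]
      · refine lintegral_congr fun x => ?_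
        rw [lintegral_const_mul _ (hF.of_uncurry_left), ← rpow_split p hp1]
      · exact ((hΦm.comp measurable_fst).pow_const _ |>.mul hF).aemeasurable
    have step2 : ∀ y, ∫⁻ x, Φ x ^ (p - 1) * F x y ∂μ ≤ A ^ (1/q) * (∫⁻ x, F x y ^ p ∂μ) ^ (1/p) := by
      intro y
      have h := ENNReal.lintegral_mul_le_Lp_mul_Lq μ hpq.symm
        (f := fun x => Φ x ^ (p - 1)) (g := fun x => F x y)
        ((hΦm.pow_const _).aemeasurable) (hF.of_uncurry_right.aemeasurable)
      refine le_trans h ?_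
      have hq : ∀ x, (Φ x ^ (p-1)) ^ q = Φ x ^ p := by
        intro x
        rw [← ENNReal.rpow_mul]
        congr 1
        exact Real.HolderConjugate.sub_one_mul_conj hpq
      simp only [hq]
      rw [mul_comm]
    calc A = ∫⁻ y, ∫⁻ x, Φ x ^ (p - 1) * F x y ∂μ ∂ν := step1
      _ ≤ ∫⁻ y, A ^ (1/q) * (∫⁻ x, F x y ^ p ∂μ) ^ (1/p) ∂ν := lintegral_mono step2
      _ = A ^ (1/q) * B := by
          rw [hB, lintegral_const_mul]
          exact (hF.pow_const _).lintegral_prod_left'.pow_const _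
  have hAq : A ^ (1/q) ≠ 0 := by simp [ENNReal.rpow_eq_zero_iff, h0, hfin]
  have hAq' : A ^ (1/q) ≠ ⊤ := ENNReal.rpow_ne_top_of_nonneg (by positivity) hfin
  have hsplit : A = A ^ (1/q) * A ^ (1/p) := by
    rw [← ENNReal.rpow_add _ _ h0 hfin, one_div, one_div, hpq.symm.inv_add_inv_eq_one,
      ENNReal.rpow_one]
  have key2 : A ^ (1/q) * A ^ (1/p) ≤ A ^ (1/q) * B := by
    calc A ^ (1/q) * A ^ (1/p) = A := hsplit.symm
      _ ≤ A ^ (1/q) * B := key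
  exact (ENNReal.mul_le_mul_iff_right hAq hAq').mp key2

lemma iSup_min_nat (a : ℝ≥0∞) : ⨆ n : ℕ, min a n = a := by
  refine le_antisymm (iSup_le fun _ => min_le_left _ _) ?_
  rcases eq_or_ne a ⊤ with rfl | h
  · simp only [min_eq_right (le_top : (_ : ℝ≥0∞) ≤ ⊤), ENNReal.iSup_natCast, le_refl]
  · obtain ⟨m, hm⟩ := ENNReal.exists_nat_gt h
    exact le_trans (le_of_eq (min_eq_left hm.le).symm) (le_iSup (fun n : ℕ => min a n) m)

lemma indicator_one_le {s : Set α} (x : α) : s.indicator (1 : α → ℝ≥0∞) x ≤ 1 :=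
  Set.indicator_le_self' (fun _ _ => zero_le) x

omit [MeasurableSpace α] in
lemma indicator_one_mul {s : Set α} (x : α) (c : ℝ≥0∞) :
    s.indicator (1 : α → ℝ≥0∞) x * c = s.indicator (fun _ => c) x := by
  by_cases h : x ∈ s <;> simp [Set.indicator_apply, h]

/-- Minkowski's integral inequality. -/
lemma minkowski_lintegral (μ : Measure α) (ν : Measure β) [SigmaFinite μ] [SigmaFinite ν]
    {p q : ℝ} (hpq : p.HolderConjugate q)
    {F : α → β → ℝ≥0∞} (hF : Measurable (Function.uncurry F)) :
    (∫⁻ x, (∫⁻ y, F x y ∂ν) ^ p ∂μ) ^ (1/p) ≤ ∫⁻ y, (∫⁻ x, F x y ^ p ∂μ) ^ (1/p) ∂ν := by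
  have hppos : 0 < p := hpq.pos
  set B : ℝ≥0∞ := ∫⁻ y, (∫⁻ x, F x y ^ p ∂μ) ^ (1/p) ∂ν with hB
  set G : ℕ → α → β → ℝ≥0∞ := fun n x y =>
    (spanningSets μ n).indicator 1 x * ((spanningSets ν n).indicator 1 y * min (F x y) n) with hG
  have hGm : ∀ n, Measurable (Function.uncurry (G n)) := by
    intro n
    apply Measurable.mul
    · exact (measurable_one.indicator (measurableSet_spanningSets μ n)).comp measurable_fst
    · exact ((measurable_one.indicator (measurableSet_spanningSets ν n)).comp
        measurable_snd).mul (hF.min measurable_const)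
  have hGmono : ∀ x y, Monotone fun n => G n x y := by
    intro x y n m hnm
    refine mul_le_mul' ?_ (mul_le_mul' ?_ ?_)
    · exact Set.indicator_le_indicator_of_subset (monotone_spanningSets μ hnm) (fun _ => zero_le) x
    · exact Set.indicator_le_indicator_of_subset (monotone_spanningSets ν hnm) (fun _ => zero_le) y
    · exact min_le_min le_rfl (Nat.cast_le.mpr hnm)
  have hGle : ∀ n x y, G n x y ≤ F x y := by
    intro n x y
    calc G n x y ≤ 1 * (1 * min (F x y) n) :=
          mul_le_mul' (indicator_one_le x) (mul_le_mul' (indicator_one_le y) le_rfl)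
      _ ≤ F x y := by rw [one_mul, one_mul]; exact min_le_left _ _
  have hGsup : ∀ x y, (⨆ n, G n x y) = F x y := by
    intro x y
    refine le_antisymm (iSup_le fun n => hGle n x y) ?_
    obtain ⟨n₁, hn₁⟩ : ∃ n, x ∈ spanningSets μ n := by
      have : x ∈ ⋃ i, spanningSets μ i := by rw [iUnion_spanningSets]; trivial
      exact Set.mem_iUnion.mp this
    obtain ⟨n₂, hn₂⟩ : ∃ n, y ∈ spanningSets ν n := by
      have : y ∈ ⋃ i, spanningSets ν i := by rw [iUnion_spanningSets]; trivial
      exact Set.mem_iUnion.mp this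
    have hmin : ∀ m : ℕ, min (F x y) m ≤ ⨆ n, G n x y := by
      intro m
      set n := max (max n₁ n₂) m with hn
      have hx : x ∈ spanningSets μ n :=
        monotone_spanningSets μ (le_max_of_le_left (le_max_left _ _)) hn₁
      have hy : y ∈ spanningSets ν n :=
        monotone_spanningSets ν (le_max_of_le_left (le_max_right _ _)) hn₂
      have hGn : G n x y = min (F x y) n := by
        rw [hG]; simp only [Set.indicator_of_mem hx, Set.indicator_of_mem hy, Pi.one_apply, one_mul]
      calc min (F x y) m ≤ min (F x y) n := min_le_min le_rfl (Nat.cast_le.mpr (le_max_right _ _))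
        _ = G n x y := hGn.symm
        _ ≤ ⨆ k, G k x y := le_iSup (fun k => G k x y) n
    calc F x y = ⨆ m : ℕ, min (F x y) m := (iSup_min_nat _).symm
      _ ≤ ⨆ n, G n x y := iSup_le hmin
  have hfinn : ∀ n, (∫⁻ x, (∫⁻ y, G n x y ∂ν) ^ p ∂μ) ≠ ⊤ := by
    intro n
    set c : ℝ≥0∞ := ν (spanningSets ν n) * n with hc
    have hc_ne : c ≠ ⊤ :=
      ENNReal.mul_ne_top (measure_spanningSets_lt_top ν n).ne (by simp)
    have hΦle : ∀ x, (∫⁻ y, G n x y ∂ν) ≤ (spanningSets μ n).indicator (fun _ => c) x := by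
      intro x
      calc ∫⁻ y, G n x y ∂ν
          = (spanningSets μ n).indicator 1 x *
              ∫⁻ y, (spanningSets ν n).indicator 1 y * min (F x y) n ∂ν := by
            rw [lintegral_const_mul _ (f := fun y => (spanningSets ν n).indicator 1 y * min (F x y) n)
              (((measurable_one.indicator (measurableSet_spanningSets ν n))).mul
                (hF.of_uncurry_left.min measurable_const))]
        _ ≤ (spanningSets μ n).indicator 1 x *
              ∫⁻ y, (spanningSets ν n).indicator 1 y * n ∂ν := by
            gcongr with y
            exact min_le_right _ _
        _ = (spanningSets μ n).indicator 1 x * c := by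
            rw [lintegral_mul_const _ (measurable_one.indicator (measurableSet_spanningSets ν n)),
              lintegral_indicator_one (measurableSet_spanningSets ν n)]
        _ = (spanningSets μ n).indicator (fun _ => c) x := indicator_one_mul x c
    have hbd : (∫⁻ x, (∫⁻ y, G n x y ∂ν) ^ p ∂μ) ≤ c ^ p * μ (spanningSets μ n) := by
      calc ∫⁻ x, (∫⁻ y, G n x y ∂ν) ^ p ∂μ
          ≤ ∫⁻ x, ((spanningSets μ n).indicator (fun _ => c) x) ^ p ∂μ := by
            exact lintegral_mono fun x => ENNReal.rpow_le_rpow (hΦle x) hppos.le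
        _ = ∫⁻ x, (spanningSets μ n).indicator (fun _ => c ^ p) x ∂μ := by
            refine lintegral_congr fun x => ?_
            by_cases h : x ∈ spanningSets μ n <;>
              simp [Set.indicator_apply, h, ENNReal.zero_rpow_of_pos hppos]
        _ = c ^ p * μ (spanningSets μ n) := by
            rw [lintegral_indicator_const (measurableSet_spanningSets μ n)]
    exact (lt_of_le_of_lt hbd (ENNReal.mul_lt_top
      (ENNReal.rpow_lt_top_of_nonneg hppos.le hc_ne) (measure_spanningSets_lt_top μ n))).ne
  rw [← ENNReal.rpow_le_rpow_iff hppos, ← ENNReal.rpow_mul,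
    one_div_mul_cancel hppos.ne', ENNReal.rpow_one]
  have hΦeq : ∀ x, (∫⁻ y, F x y ∂ν) ^ p = ⨆ n, (∫⁻ y, G n x y ∂ν) ^ p := by
    intro x
    have h1 : (∫⁻ y, F x y ∂ν) = ⨆ n, ∫⁻ y, G n x y ∂ν := by
      rw [← lintegral_iSup (fun n => (hGm n).of_uncurry_left)
        (fun n m hnm y => hGmono x y hnm)]
      exact lintegral_congr fun y => (hGsup x y).symm
    rw [h1]
    refine Monotone.map_iSup_of_continuousAt (f := fun a : ℝ≥0∞ => a ^ p) ?_ ?_ ?_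
    · exact (ENNReal.continuous_rpow_const (y := p)).continuousAt
    · exact fun a b hab => ENNReal.rpow_le_rpow hab hppos.le
    · exact ENNReal.zero_rpow_of_pos hppos
  calc ∫⁻ x, (∫⁻ y, F x y ∂ν) ^ p ∂μ
      = ⨆ n, ∫⁻ x, (∫⁻ y, G n x y ∂ν) ^ p ∂μ := by
        rw [← lintegral_iSup]
        · exact lintegral_congr fun x => hΦeq x
        · exact fun n => ((hGm n).lintegral_prod_right').pow_const _
        · intro n m hnm x
          exact ENNReal.rpow_le_rpow (lintegral_mono fun y => hGmono x y hnm) hppos.le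
    _ ≤ B ^ p := by
        refine iSup_le fun n => ?_
        have h1 := minkowski_aux μ ν hpq (hGm n) (hfinn n)
        have h2 : (∫⁻ y, (∫⁻ x, G n x y ^ p ∂μ) ^ (1/p) ∂ν) ≤ B := by
          refine lintegral_mono fun y => ?_
          refine ENNReal.rpow_le_rpow (lintegral_mono fun x => ?_) (by positivity)
          exact ENNReal.rpow_le_rpow (hGle n x y) hppos.le
        have h3 := le_trans h1 h2
        calc ∫⁻ x, (∫⁻ y, G n x y ∂ν) ^ p ∂μ
            = ((∫⁻ x, (∫⁻ y, G n x y ∂ν) ^ p ∂μ) ^ (1/p)) ^ p := by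
              rw [← ENNReal.rpow_mul, one_div_mul_cancel hppos.ne', ENNReal.rpow_one]
          _ ≤ B ^ p := ENNReal.rpow_le_rpow h3 hppos.le

end Minkowski

lemma lintegral_comp_smul_E3 (f : E3 → ℝ≥0∞) {R : ℝ} (hR : R ≠ 0) :
    ∫⁻ x : E3, f (R • x) = ENNReal.ofReal |(R ^ 3)⁻¹| * ∫⁻ x, f x := by
  have h := lintegral_map_equiv (μ := (volume : Measure E3)) f
    ((Homeomorph.smul (isUnit_iff_ne_zero.2 hR).unit).toMeasurableEquiv)
  have hcoe : (((Homeomorph.smul (isUnit_iff_ne_zero.2 hR).unit).toMeasurableEquiv : E3 ≃ᵐ E3) :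
      E3 → E3) = fun x : E3 => R • x := rfl
  rw [hcoe] at h
  rw [← h, Measure.map_addHaar_smul volume hR, lintegral_smul_measure,
    finrank_euclideanSpace_fin, smul_eq_mul]

/-- Strichartz estimate for the free transport flow:
`‖∫ w₀(x−tv,v) dv‖_{L^{6/5}_x} ≤ t^{−1/2} ‖w₀‖_{L¹_x(L^{6/5}_v)}`. -/
theorem free_transport_strichartz (w₀ : E3 × E3 → ℝ) (hmeas : Measurable w₀)
    (hfin : mixedNorm w₀ < ⊤) :
    ∀ t : ℝ, 0 < t →
      MemLp (fun x : E3 => ∫ v : E3, w₀ (x - t • v, v)) (ENNReal.ofReal (6/5)) volume ∧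
      eLpNorm (fun x : E3 => ∫ v : E3, w₀ (x - t • v, v)) (ENNReal.ofReal (6/5)) volume ≤
        ENNReal.ofReal (t ^ (-(1:ℝ)/2)) * mixedNorm w₀ := by
  intro t ht
  have ht0 : t ≠ 0 := ht.ne'
  have hpq : ((6:ℝ)/5).HolderConjugate 6 := Real.holderConjugate_iff.mpr ⟨by norm_num, by norm_num⟩
  have hP0 : (ENNReal.ofReal (6/5)) ≠ 0 := by
    simp only [ne_eq, ENNReal.ofReal_eq_zero, not_le]; norm_num
  have hPtop : (ENNReal.ofReal (6/5) : ℝ≥0∞) ≠ ⊤ := ENNReal.ofReal_ne_top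
  have hPtoReal : (ENNReal.ofReal (6/5) : ℝ≥0∞).toReal = (6:ℝ)/5 := by
    rw [ENNReal.toReal_ofReal]; norm_num
  set G : E3 × E3 → ℝ≥0∞ := fun q => (‖w₀ q‖₊ : ℝ≥0∞) with hGdef
  have hGm : Measurable G := hmeas.enorm
  have hφ : Measurable (fun q : E3 × E3 => ((q.1 - t • q.2, q.2) : E3 × E3)) :=
    (measurable_fst.sub (measurable_snd.const_smul t)).prodMk measurable_snd
  have hfm : StronglyMeasurable (fun x : E3 => ∫ v : E3, w₀ (x - t • v, v)) :=
    (hmeas.comp hφ).stronglyMeasurable.integral_prod_right'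
  set c : ℝ≥0∞ := ENNReal.ofReal (t ^ 3) with hc
  have hc0 : c ≠ 0 := by
    simp only [hc, ne_eq, ENNReal.ofReal_eq_zero, not_le]; positivity
  have hctop : c ≠ ⊤ := ENNReal.ofReal_ne_top
  set F : E3 → E3 → ℝ≥0∞ := fun x u => G (u, t⁻¹ • (x - u)) with hF
  have hFm : Measurable (Function.uncurry F) :=
    hGm.comp (measurable_snd.prodMk ((measurable_fst.sub measurable_snd).const_smul t⁻¹))
  have habs : ENNReal.ofReal |(((t⁻¹) ^ 3)⁻¹)| = c := by
    rw [hc, inv_pow, inv_inv, abs_of_pos (by positivity)]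
  have key2 : ∀ x : E3, (∫⁻ v : E3, G (x - t • v, v)) = c⁻¹ * ∫⁻ u : E3, F x u := by
    intro x
    set h : E3 → ℝ≥0∞ := fun v => G (x - t • v, v) with hh
    have hhm : Measurable h :=
      hGm.comp ((measurable_const.sub (measurable_id.const_smul t)).prodMk measurable_id)
    have e1 : ∀ u : E3, F x u = h (t⁻¹ • (x - u)) := by
      intro u
      show G (u, t⁻¹ • (x - u)) = G (x - t • (t⁻¹ • (x - u)), t⁻¹ • (x - u))
      rw [smul_inv_smul₀ ht0, _root_.sub_sub_cancel]
    have e2 : (∫⁻ u : E3, F x u) = ∫⁻ u : E3, h (t⁻¹ • (x - u)) := lintegral_congr e1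
    have e3 : (∫⁻ u : E3, h (t⁻¹ • (x - u))) = ∫⁻ w : E3, h (t⁻¹ • w) :=
      (Measure.measurePreserving_sub_left volume x).lintegral_comp
        (hhm.comp (measurable_id.const_smul t⁻¹))
    have e4 : (∫⁻ w : E3, h (t⁻¹ • w)) = c * ∫⁻ v, h v := by
      rw [lintegral_comp_smul_E3 h (inv_ne_zero ht0), habs]
    rw [e2, e3, e4, ← mul_assoc, ENNReal.inv_mul_cancel hc0 hctop, one_mul]
  have key4 : ∀ u : E3,
      (∫⁻ x : E3, F x u ^ ((6:ℝ)/5)) = c * ∫⁻ v : E3, G (u, v) ^ ((6:ℝ)/5) := by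
    intro u
    set k : E3 → ℝ≥0∞ := fun z => G (u, z) ^ ((6:ℝ)/5) with hk
    have hkm : Measurable k :=
      (hGm.comp (measurable_const.prodMk measurable_id)).pow_const _
    calc ∫⁻ x : E3, F x u ^ ((6:ℝ)/5)
        = ∫⁻ x : E3, k (t⁻¹ • (x - u)) := rfl
      _ = ∫⁻ x : E3, k (t⁻¹ • x) :=
          (measurePreserving_sub_right volume u).lintegral_comp
            (hkm.comp (measurable_id.const_smul t⁻¹))
      _ = c * ∫⁻ z, k z := by rw [lintegral_comp_smul_E3 k (inv_ne_zero ht0), habs]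
  have h56 : 1 / ((6:ℝ)/5) = (5:ℝ)/6 := by norm_num
  have minq := minkowski_lintegral (volume : Measure E3) (volume : Measure E3) hpq hFm
  rw [h56] at minq
  have hmixed : mixedNorm w₀ = ∫⁻ u : E3, (∫⁻ v : E3, G (u, v) ^ ((6:ℝ)/5)) ^ ((5:ℝ)/6) := rfl
  have hconst : c⁻¹ * c ^ ((5:ℝ)/6) = ENNReal.ofReal (t ^ (-(1:ℝ)/2)) := by
    rw [← ENNReal.rpow_neg_one c, ← ENNReal.rpow_add _ _ hc0 hctop, hc,
      ENNReal.ofReal_rpow_of_pos (by positivity)]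
    congr 1
    rw [← Real.rpow_natCast t 3, ← Real.rpow_mul ht.le]
    norm_num
  have main : eLpNorm (fun x : E3 => ∫ v : E3, w₀ (x - t • v, v)) (ENNReal.ofReal (6/5)) volume ≤
      ENNReal.ofReal (t ^ (-(1:ℝ)/2)) * mixedNorm w₀ := by
    rw [eLpNorm_eq_lintegral_rpow_enorm_toReal hP0 hPtop, hPtoReal, h56]
    calc (∫⁻ x : E3, (‖∫ v : E3, w₀ (x - t • v, v)‖₊ : ℝ≥0∞) ^ ((6:ℝ)/5)) ^ ((5:ℝ)/6)
        ≤ (∫⁻ x : E3, (c⁻¹ * ∫⁻ u : E3, F x u) ^ ((6:ℝ)/5)) ^ ((5:ℝ)/6) := by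
          gcongr with x
          rw [← key2 x]
          exact enorm_integral_le_lintegral_enorm _
      _ = c⁻¹ * (∫⁻ x : E3, (∫⁻ u : E3, F x u) ^ ((6:ℝ)/5)) ^ ((5:ℝ)/6) := by
          simp_rw [ENNReal.mul_rpow_of_nonneg _ _ (by norm_num : (0:ℝ) ≤ 6/5)]
          rw [lintegral_const_mul _ (show Measurable fun x : E3 => (∫⁻ u : E3, F x u) ^ ((6:ℝ)/5)
              from hFm.lintegral_prod_right'.pow_const _),
            ENNReal.mul_rpow_of_nonneg _ _ (by norm_num : (0:ℝ) ≤ 5/6),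
            ← ENNReal.rpow_mul]
          norm_num
      _ ≤ c⁻¹ * ∫⁻ u : E3, (∫⁻ x : E3, F x u ^ ((6:ℝ)/5)) ^ ((5:ℝ)/6) := by
          exact mul_le_mul_right minq _
      _ = c⁻¹ * ∫⁻ u : E3, (c * ∫⁻ v : E3, G (u, v) ^ ((6:ℝ)/5)) ^ ((5:ℝ)/6) := by
          congr 1
          exact lintegral_congr fun u => by rw [key4 u]
      _ = c⁻¹ * (c ^ ((5:ℝ)/6) * mixedNorm w₀) := by
          congr 1
          simp_rw [ENNReal.mul_rpow_of_nonneg _ _ (by norm_num : (0:ℝ) ≤ 5/6)]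
          rw [lintegral_const_mul _ (show Measurable fun u : E3 =>
              (∫⁻ v : E3, G (u, v) ^ ((6:ℝ)/5)) ^ ((5:ℝ)/6)
              from ((hGm.pow_const _).lintegral_prod_right').pow_const _), hmixed]
      _ = ENNReal.ofReal (t ^ (-(1:ℝ)/2)) * mixedNorm w₀ := by
          rw [← mul_assoc, hconst]
  refine ⟨⟨hfm.aestronglyMeasurable, ?_⟩, main⟩
  exact lt_of_le_of_lt main (ENNReal.mul_lt_top ENNReal.ofReal_lt_top hfin)

end
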